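/- Replacement theorem: Let P be a nested program and let F, G be formulas that are equivalent relative to P (for every SE-model (X,Y) of P, X ⊨ F^Y iff X ⊨ G^Y). If Q' is obtained from a nested program Q by replacing some regular occurrences of F by G (occurrences that are not an atom immediately preceded by ¬), then P ∪ Q and P ∪ Q' are strongly equivalent. -/
import Mathlib


open scoped Classical

inductive Lit where
  | pos : ℕ → Lit
  | neg : ℕ → Lit
deriving DecidableEq

inductive Fml where
  | bot : Fml
  | top : Fml
  | lit : Lit → Fml
  | not : Fml → Fml
  | conj : Fml → Fml → Fml
  | disj : Fml → Fml → Fml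
deriving DecidableEq

structure Rule where
  head : Fml
  body : Fml
deriving DecidableEq

abbrev Prog := Set Rule

/-- A set of literals is consistent if it contains no complementary pair. -/
def Consistent (X : Set Lit) : Prop :=
  ∀ a : ℕ, ¬ (Lit.pos a ∈ X ∧ Lit.neg a ∈ X)

def Sat (X : Set Lit) : Fml → Prop
  | Fml.bot => False
  | Fml.top => True
  | Fml.lit l => l ∈ X
  | Fml.not F => ¬ Sat X F
  | Fml.conj F G => Sat X F ∧ Sat X G
  | Fml.disj F G => Sat X F ∨ Sat X G

def SatRule (X : Set Lit) (r : Rule) : Prop := Sat X r.body → Sat X r.head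

def SatProg (X : Set Lit) (P : Prog) : Prop := ∀ r ∈ P, SatRule X r

/-- The reduct of a formula relative to X. -/
noncomputable def Reduct (X : Set Lit) : Fml → Fml
  | Fml.bot => Fml.bot
  | Fml.top => Fml.top
  | Fml.lit l => Fml.lit l
  | Fml.not F => if Sat X F then Fml.bot else Fml.top
  | Fml.conj F G => Fml.conj (Reduct X F) (Reduct X G)
  | Fml.disj F G => Fml.disj (Reduct X F) (Reduct X G)

noncomputable def ReductRule (X : Set Lit) (r : Rule) : Rule :=
  ⟨Reduct X r.head, Reduct X r.body⟩

noncomputable def ReductProg (X : Set Lit) (P : Prog) : Prog :=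
  ReductRule X '' P

/-- Y is an answer set for P: Y is minimal among consistent sets satisfying the reduct of P w.r.t. Y. -/
def AnswerSet (Y : Set Lit) (P : Prog) : Prop :=
  Consistent Y ∧ SatProg Y (ReductProg Y P) ∧
    ∀ Z : Set Lit, Consistent Z → SatProg Z (ReductProg Y P) → Z ⊆ Y → Z = Y

def SEModel (P : Prog) (X Y : Set Lit) : Prop :=
  Consistent X ∧ Consistent Y ∧ X ⊆ Y ∧ SatProg Y P ∧ SatProg X (ReductProg Y P)

def StrongEq (P Q : Prog) : Prop :=
  ∀ R : Prog, ∀ Y : Set Lit, AnswerSet Y (P ∪ R) ↔ AnswerSet Y (Q ∪ R)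

def Fml.negFree : Fml → Prop
  | Fml.bot => True
  | Fml.top => True
  | Fml.lit l => ∃ a, l = Lit.pos a
  | Fml.not F => F.negFree
  | Fml.conj F G => F.negFree ∧ G.negFree
  | Fml.disj F G => F.negFree ∧ G.negFree

def ProgNegFree (P : Prog) : Prop := ∀ r ∈ P, r.head.negFree ∧ r.body.negFree

/-- The set of atoms (positive literals) in a set of literals. -/
def PosLits (Z : Set Lit) : Set Lit := {l ∈ Z | ∃ a, l = Lit.pos a}

def AtomsOnly (Z : Set Lit) : Prop := ∀ l ∈ Z, ∃ a, l = Lit.pos a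

/-- `Repl F G H H'` : H' is obtained from H by replacing some (regular) occurrences
of F by G.  (In this representation classical negation is part of literals, so every
formula occurrence is regular.) -/
inductive Repl (F G : Fml) : Fml → Fml → Prop
  | refl (H : Fml) : Repl F G H H
  | repl : Repl F G F G
  | not {H H' : Fml} : Repl F G H H' → Repl F G (Fml.not H) (Fml.not H')
  | conj {H₁ H₁' H₂ H₂' : Fml} :
      Repl F G H₁ H₁' → Repl F G H₂ H₂' → Repl F G (Fml.conj H₁ H₂) (Fml.conj H₁' H₂')
  | disj {H₁ H₁' H₂ H₂' : Fml} :
      Repl F G H₁ H₁' → Repl F G H₂ H₂' → Repl F G (Fml.disj H₁ H₂) (Fml.disj H₁' H₂')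

/-- Q' is obtained from Q by replacing occurrences of F by G in heads and bodies. -/
def ReplProg (F G : Fml) (Q Q' : Prog) : Prop :=
  ∃ f : Rule → Rule, Q' = f '' Q ∧
    ∀ r ∈ Q, Repl F G r.head (f r).head ∧ Repl F G r.body (f r).body

lemma satReduct (X : Set Lit) (H : Fml) : Sat X (Reduct X H) ↔ Sat X H := by
  induction H with
  | bot => simp [Reduct]
  | top => simp [Reduct]
  | lit l => simp [Reduct]
  | not H ih =>
    simp only [Reduct]
    by_cases h : Sat X H
    · simp [h, Sat]
    · simp [h, Sat]
  | conj H₁ H₂ ih₁ ih₂ => simp [Reduct, Sat, ih₁, ih₂]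
  | disj H₁ H₂ ih₁ ih₂ => simp [Reduct, Sat, ih₁, ih₂]

lemma satRuleReduct (X : Set Lit) (r : Rule) :
    SatRule X (ReductRule X r) ↔ SatRule X r := by
  simp [SatRule, ReductRule, satReduct]

lemma replInv (F G : Fml) (Y : Set Lit) (h2 : Sat Y F ↔ Sat Y G)
    {H H' : Fml} (hr : Repl F G H H') :
    ∀ X : Set Lit, (Sat X (Reduct Y F) ↔ Sat X (Reduct Y G)) →
      (Sat X (Reduct Y H) ↔ Sat X (Reduct Y H')) := by
  induction hr with
  | refl H => intro X _; rfl
  | repl => intro X h1; exact h1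
  | not hr ih =>
    intro X h1
    rename_i H H'
    have hy : Sat Y H ↔ Sat Y H' := by
      have := ih Y (by rw [satReduct, satReduct]; exact h2)
      rwa [satReduct, satReduct] at this
    simp only [Reduct]
    by_cases h : Sat Y H
    · rw [if_pos h, if_pos (hy.mp h)]
    · rw [if_neg h, if_neg (fun hh => h (hy.mpr hh))]
  | conj hr₁ hr₂ ih₁ ih₂ =>
    intro X h1
    simp only [Reduct, Sat]
    exact and_congr (ih₁ X h1) (ih₂ X h1)
  | disj hr₁ hr₂ ih₁ ih₂ =>
    intro X h1
    simp only [Reduct, Sat]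
    exact or_congr (ih₁ X h1) (ih₂ X h1)

lemma satProg_union (X : Set Lit) (A B : Prog) :
    SatProg X (A ∪ B) ↔ SatProg X A ∧ SatProg X B := by
  simp [SatProg, Set.mem_union, or_imp, forall_and]

lemma reductProg_union (Y : Set Lit) (A B : Prog) :
    ReductProg Y (A ∪ B) = ReductProg Y A ∪ ReductProg Y B := by
  simp [ReductProg, Set.image_union]

lemma satProg_reductProg (X Y : Set Lit) (Q : Prog) :
    SatProg X (ReductProg Y Q) ↔ ∀ r ∈ Q, SatRule X (ReductRule Y r) := by
  simp [SatProg, ReductProg]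

lemma satProgY (Y : Set Lit) (P : Prog) (h : SatProg Y (ReductProg Y P)) :
    SatProg Y P := by
  intro r hr
  have := (satProg_reductProg Y Y P).mp h r hr
  rwa [satRuleReduct] at this

lemma auxIff (P Q Q' : Prog) (F G : Fml)
    (heq : ∀ X Y : Set Lit, SEModel P X Y → (Sat X (Reduct Y F) ↔ Sat X (Reduct Y G)))
    (hrep : ReplProg F G Q Q') (Y : Set Lit) (hcY : Consistent Y)
    (hY : SatProg Y (ReductProg Y P)) :
    ∀ X : Set Lit, Consistent X → X ⊆ Y → SatProg X (ReductProg Y P) →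
      (SatProg X (ReductProg Y Q) ↔ SatProg X (ReductProg Y Q')) := by
  obtain ⟨f, hQ', hf⟩ := hrep
  intro X hcX hXY hXP
  have hYPsat : SatProg Y P := satProgY Y P hY
  have h1 := heq X Y ⟨hcX, hcY, hXY, hYPsat, hXP⟩
  have h2 : Sat Y F ↔ Sat Y G := by
    have := heq Y Y ⟨hcY, hcY, subset_rfl, hYPsat, hY⟩
    rwa [satReduct, satReduct] at this
  have key : ∀ r ∈ Q, SatRule X (ReductRule Y r) ↔ SatRule X (ReductRule Y (f r)) := by
    intro r hr
    obtain ⟨hh, hb⟩ := hf r hr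
    exact imp_congr (replInv F G Y h2 hb X h1) (replInv F G Y h2 hh X h1)
  rw [satProg_reductProg, satProg_reductProg, hQ']
  simp only [Set.forall_mem_image]
  exact forall₂_congr fun r hr => key r hr

lemma transfer (P Q Q' R : Prog) (Y : Set Lit)
    (hiff : ∀ X : Set Lit, Consistent X → X ⊆ Y → SatProg X (ReductProg Y P) →
      (SatProg X (ReductProg Y Q) ↔ SatProg X (ReductProg Y Q')))
    (h : AnswerSet Y ((P ∪ Q) ∪ R)) : AnswerSet Y ((P ∪ Q') ∪ R) := by
  obtain ⟨hc, hs, hmin⟩ := h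
  rw [reductProg_union, reductProg_union, satProg_union, satProg_union] at hs
  obtain ⟨⟨hsP, hsQ⟩, hsR⟩ := hs
  refine ⟨hc, ?_, ?_⟩
  · rw [reductProg_union, reductProg_union, satProg_union, satProg_union]
    exact ⟨⟨hsP, (hiff Y hc subset_rfl hsP).mp hsQ⟩, hsR⟩
  · intro Z hcZ hsZ hZY
    apply hmin Z hcZ _ hZY
    rw [reductProg_union, reductProg_union, satProg_union, satProg_union] at hsZ ⊢
    exact ⟨⟨hsZ.1.1, (hiff Z hcZ hZY hsZ.1.1).mpr hsZ.1.2⟩, hsZ.2⟩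

/-- Replacement theorem: if F and G are equivalent relative to P and Q'
is obtained from Q by replacing (regular) occurrences of F by G, then P ∪ Q and P ∪ Q'
are strongly equivalent. -/
theorem stmt11 (P Q Q' : Prog) (F G : Fml)
    (heq : ∀ X Y : Set Lit, SEModel P X Y → (Sat X (Reduct Y F) ↔ Sat X (Reduct Y G)))
    (hrep : ReplProg F G Q Q') :
    StrongEq (P ∪ Q) (P ∪ Q') := by
  intro R Y
  constructor
  · intro h
    have hc := h.1
    have hYP : SatProg Y (ReductProg Y P) := by
      have hs := h.2.1
      rw [reductProg_union, reductProg_union, satProg_union, satProg_union] at hs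
      exact hs.1.1
    exact transfer P Q Q' R Y (auxIff P Q Q' F G heq hrep Y hc hYP) h
  · intro h
    have hc := h.1
    have hYP : SatProg Y (ReductProg Y P) := by
      have hs := h.2.1
      rw [reductProg_union, reductProg_union, satProg_union, satProg_union] at hs
      exact hs.1.1
    exact transfer P Q' Q R Y
      (fun X a b c => (auxIff P Q Q' F G heq hrep Y hc hYP X a b c).symm) h
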